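/- Let G be a finite normal form game with strict preferences, a₀ ∈ A an initial reference point, k a positive integer, and I an admissible player function. Then the subgame perfect equilibrium outcome of Γ(a₀,k,I) is unique: any two subgame perfect equilibria of Γ(a₀,k,I) have the same outcome. -/
import Mathlib


namespace NoHarm

/-- A finite normal form game with `n` players: finite action sets `A i`,
nonempty, with decidable equality, and utility functions `u i : Profile → ℝ`. -/
structure Game (n : ℕ) where
  A : Fin n → Type
  fintypeA : ∀ i, Fintype (A i)
  decA : ∀ i, DecidableEq (A i)
  neA : ∀ i, Nonempty (A i)
  u : Fin n → (∀ i, A i) → ℝ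

attribute [instance] Game.fintypeA Game.decA Game.neA

/-- Action profiles of `G`. -/
abbrev Profile {n : ℕ} (G : Game n) : Type := ∀ i, G.A i

/-- A recorded move in the extensive form game `Γ`: the acting player together
with their choice (`none` = pass, `some a` = choose action `a`; choosing the
current component of the state is "staying", any other action is "moving"). -/
abbrev Move {n : ℕ} (G : Game n) : Type := Σ i : Fin n, Option (G.A i)

/-- A node of `Γ`, identified with the history of moves leading to it
(the root is `[]`). -/
abbrev Hist {n : ℕ} (G : Game n) : Type := List (Move G)

variable {n : ℕ}

/-- One step of the left fold computing, along a history, the triple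
(current state, current reference point, player who established the current
reference point by staying -- `none` for the initial reference point). -/
def stepFold (G : Game n) (x : Profile G × Profile G × Option (Fin n)) (m : Move G) :
    Profile G × Profile G × Option (Fin n) :=
  match m with
  | ⟨_, none⟩ => x
  | ⟨i, some a⟩ =>
    if a = x.1 i then (x.1, x.1, some i)
    else (Function.update x.1 i a, x.2.1, x.2.2)

/-- The (state, reference point, proposer) data at the node `h` of `Γ(a0,·,·)`. -/
def fold3 (G : Game n) (a0 : Profile G) (h : Hist G) :
    Profile G × Profile G × Option (Fin n) :=
  h.foldl (stepFold G) (a0, a0, none)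

/-- The state `S(x)` at a node. -/
def state (G : Game n) (a0 : Profile G) (h : Hist G) : Profile G := (fold3 G a0 h).1

/-- The reference point at a node (the most recent state at which a player
stayed, initially `a0`). -/
def refpt (G : Game n) (a0 : Profile G) (h : Hist G) : Profile G := (fold3 G a0 h).2.1

/-- The player who established the current reference point by staying
(`none` if it is still the initial reference point `a0`). -/
def proposer (G : Game n) (a0 : Profile G) (h : Hist G) : Option (Fin n) :=
  (fold3 G a0 h).2.2

/-- `m` is a stay action at the node `h`: the mover chooses exactly the
component of the current state belonging to them. -/
def IsStay (G : Game n) (a0 : Profile G) (h : Hist G) (m : Move G) : Prop :=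
  m.2 = some (state G a0 h m.1)

/-- Termination condition (i): one player stayed at a state `b`, making it
the reference point, and a different player subsequently also stays at `b`. -/
def TerminalStay (G : Game n) (a0 : Profile G) (h : Hist G) : Prop :=
  ∃ (h' : Hist G) (m : Move G) (i : Fin n),
    h = h' ++ [m] ∧ IsStay G a0 h' m ∧ refpt G a0 h' = state G a0 h' ∧
    proposer G a0 h' = some i ∧ i ≠ m.1

/-- Termination condition (ii): all `n` players consecutively pass
(the last `n` moves are passes and every player is among their movers). -/
def TerminalPass (G : Game n) (h : Hist G) : Prop :=
  n ≤ h.length ∧ (∀ m ∈ h.drop (h.length - n), m.2 = none) ∧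
    (∀ i : Fin n, ∃ m ∈ h.drop (h.length - n), m.1 = i)

/-- Terminal nodes of `Γ(a0,·,·)`. -/
def Terminal (G : Game n) (a0 : Profile G) (h : Hist G) : Prop :=
  TerminalStay G a0 h ∨ TerminalPass G h

/-- Number of predecessor nodes of `h` having the same state as `h` at which
the move `m` was made. -/
def countAct (G : Game n) (a0 : Profile G) (h : Hist G) (m : Move G) : ℕ :=
  ((Finset.range h.length).filter
    (fun t => h[t]? = some m ∧ state G a0 (h.take t) = state G a0 h)).card

/-- Availability of the choice `c` for player `i` at node `h`: pass is always
available, and an action `a` is available iff `i` has chosen `a` at fewer than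
`k` predecessor nodes carrying the same state as `h`. -/
def availAct (G : Game n) (a0 : Profile G) (k : ℕ) (h : Hist G) {i : Fin n}
    (c : Option (G.A i)) : Prop :=
  ∀ a : G.A i, c = some a → countAct G a0 h ⟨i, some a⟩ < k

/-- `h` is a (valid) node of the game tree of `Γ(a0,k,I)`: at each step the
recorded mover is the active player given by the player function `I`, the
chosen action was available, and no proper predecessor is terminal. -/
structure IsNode (G : Game n) (a0 : Profile G) (k : ℕ) (I : Hist G → Fin n)
    (h : Hist G) : Prop where
  mover : ∀ (t : ℕ) (ht : t < h.length), (h.get ⟨t, ht⟩).1 = I (h.take t)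
  avail : ∀ (t : ℕ) (ht : t < h.length), availAct G a0 k (h.take t) (h.get ⟨t, ht⟩).2
  nonterm : ∀ t < h.length, ¬ Terminal G a0 (h.take t)

/-- The player function is admissible: along every path of play the numbers of
nodes at which any two players have been active differ by at most one. -/
def Admissible (G : Game n) (a0 : Profile G) (k : ℕ) (I : Hist G → Fin n) : Prop :=
  ∀ h, IsNode G a0 k I h → ∀ i j : Fin n,
    (h.map Sigma.fst).count i ≤ (h.map Sigma.fst).count j + 1

/-- A pure strategy of player `i`: a choice (pass or an action) at every node. -/
abbrev Strategy (G : Game n) (i : Fin n) : Type := Hist G → Option (G.A i)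

/-- A pure strategy profile. -/
abbrev StratProfile (G : Game n) : Type := ∀ i, Strategy G i

/-- A strategy profile is valid if at every non-terminal node of the tree the
active player's prescribed choice is available. -/
def ValidProfile (G : Game n) (a0 : Profile G) (k : ℕ) (I : Hist G → Fin n)
    (σ : StratProfile G) : Prop :=
  ∀ h, IsNode G a0 k I h → ¬ Terminal G a0 h → availAct G a0 k h (σ (I h) h)

open Classical in
/-- Play according to `σ` for (at most) the given number of steps from a node,
stopping at terminal nodes. -/
noncomputable def playN (G : Game n) (a0 : Profile G) (I : Hist G → Fin n)
    (σ : StratProfile G) : ℕ → Hist G → Hist G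
  | 0, h => h
  | (t + 1), h =>
    if Terminal G a0 h then h
    else playN G a0 I σ t (h ++ [⟨I h, σ (I h) h⟩])

/-- A (generous) upper bound for the length of any play of `Γ(a0,k,I)`. -/
def bound (G : Game n) (k : ℕ) : ℕ :=
  ((k + 2) * (Fintype.card (Profile G) + 2) * ((∑ i, Fintype.card (G.A i)) + 2) + 2)
    * (n + 2) * 4

/-- The outcome of `σ` in the subgame rooted at `h`: the reference point at the
terminal node reached by playing `σ` from `h`. -/
noncomputable def outcomeFrom (G : Game n) (a0 : Profile G) (k : ℕ)
    (I : Hist G → Fin n) (σ : StratProfile G) (h : Hist G) : Profile G :=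
  refpt G a0 (playN G a0 I σ (bound G k + 1) h)

/-- The outcome of the strategy profile `σ` in `Γ(a0,k,I)`. -/
noncomputable def outcome (G : Game n) (a0 : Profile G) (k : ℕ)
    (I : Hist G → Fin n) (σ : StratProfile G) : Profile G :=
  outcomeFrom G a0 k I σ []

/-- `σ` satisfies the no-harm principle: every stay action it prescribes, at
every (on- or off-path) non-terminal node of the tree, does not harm any other
player relative to the reference point at that node. -/
def SatNHP (G : Game n) (a0 : Profile G) (k : ℕ) (I : Hist G → Fin n)
    (σ : StratProfile G) : Prop :=
  ∀ h, IsNode G a0 k I h → ¬ Terminal G a0 h →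
    σ (I h) h = some (state G a0 h (I h)) →
    ∀ j, j ≠ I h → G.u j (refpt G a0 h) ≤ G.u j (state G a0 h)

/-- No-harm equilibrium of `Γ(a0,k,I)`: a valid strategy profile satisfying the
NHP such that at every non-terminal node the active player's choice is a best
response among deviations keeping the profile valid and NHP-compliant. -/
def NHE (G : Game n) (a0 : Profile G) (k : ℕ) (I : Hist G → Fin n)
    (σ : StratProfile G) : Prop :=
  ValidProfile G a0 k I σ ∧ SatNHP G a0 k I σ ∧
  ∀ h, IsNode G a0 k I h → ¬ Terminal G a0 h →
    ∀ τ : Strategy G (I h),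
      ValidProfile G a0 k I (Function.update σ (I h) τ) →
      SatNHP G a0 k I (Function.update σ (I h) τ) →
      G.u (I h) (outcomeFrom G a0 k I (Function.update σ (I h) τ) h) ≤
        G.u (I h) (outcomeFrom G a0 k I σ h)

/-- Subgame perfect equilibrium of `Γ(a0,k,I)` (no NHP constraint). -/
def SPE (G : Game n) (a0 : Profile G) (k : ℕ) (I : Hist G → Fin n)
    (σ : StratProfile G) : Prop :=
  ValidProfile G a0 k I σ ∧
  ∀ h, IsNode G a0 k I h → ¬ Terminal G a0 h →
    ∀ τ : Strategy G (I h),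
      ValidProfile G a0 k I (Function.update σ (I h) τ) →
      G.u (I h) (outcomeFrom G a0 k I (Function.update σ (I h) τ) h) ≤
        G.u (I h) (outcomeFrom G a0 k I σ h)

/-- `b` Pareto dominates `a`. -/
def ParetoDom (G : Game n) (b a : Profile G) : Prop :=
  (∀ i, G.u i a ≤ G.u i b) ∧ ∃ i, G.u i a < G.u i b

/-- `a` is Pareto optimal. -/
def ParetoOpt (G : Game n) (a : Profile G) : Prop := ∀ b, ¬ ParetoDom G b a

/-- `b` strictly Pareto dominates `a`. -/
def StrictDom (G : Game n) (b a : Profile G) : Prop := ∀ i, G.u i a < G.u i b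

/-- `a` is weakly Pareto optimal. -/
def WeakParetoOpt (G : Game n) (a : Profile G) : Prop := ∀ b, ¬ StrictDom G b a

/-- Preferences are strict: each utility function is injective on profiles. -/
def StrictPrefs (G : Game n) : Prop := ∀ i, Function.Injective (G.u i)



/-! ### Auxiliary machinery -/

section Aux

open Classical

variable {n : ℕ} {G : Game n} {a0 : Profile G} {k : ℕ} {I : Hist G → Fin n}

lemma playN_zero (σ : StratProfile G) (h : Hist G) : playN G a0 I σ 0 h = h := rfl

lemma playN_succ (σ : StratProfile G) (t : ℕ) (h : Hist G) :
    playN G a0 I σ (t+1) h =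
      if Terminal G a0 h then h
      else playN G a0 I σ t (h ++ [⟨I h, σ (I h) h⟩]) := by
  rfl

lemma playN_of_terminal (σ : StratProfile G) (t : ℕ) {h : Hist G}
    (hT : Terminal G a0 h) : playN G a0 I σ t h = h := by
  cases t with
  | zero => rfl
  | succ t => rw [playN_succ, if_pos hT]

lemma playN_add_of_terminal (σ : StratProfile G) {t : ℕ} {h : Hist G}
    (hT : Terminal G a0 (playN G a0 I σ t h)) (s : ℕ) :
    playN G a0 I σ (t + s) h = playN G a0 I σ t h := by
  induction t generalizing h with
  | zero =>
    simp only [Nat.zero_add, playN_zero] at hT ⊢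
    exact playN_of_terminal σ s hT
  | succ t ih =>
    by_cases hTh : Terminal G a0 h
    · rw [playN_of_terminal σ _ hTh, playN_of_terminal σ _ hTh]
    · rw [playN_succ, if_neg hTh] at hT ⊢
      rw [show t + 1 + s = (t + s) + 1 by omega, playN_succ, if_neg hTh]
      exact ih hT

lemma playN_congr (σ₁ σ₂ : StratProfile G) (t : ℕ) (h : Hist G)
    (hag : ∀ g : Hist G, h.length ≤ g.length → ∀ j, σ₁ j g = σ₂ j g) :
    playN G a0 I σ₁ t h = playN G a0 I σ₂ t h := by
  induction t generalizing h with
  | zero => rfl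
  | succ t ih =>
    rw [playN_succ, playN_succ]
    by_cases hT : Terminal G a0 h
    · rw [if_pos hT, if_pos hT]
    · rw [if_neg hT, if_neg hT, hag h le_rfl (I h)]
      exact ih _ (fun g hg j => hag g (by simp at hg ⊢; omega) j)

lemma isNode_nil : IsNode G a0 k I [] := by
  refine ⟨?_, ?_, ?_⟩ <;> intro t ht <;> simp at ht

lemma IsNode.take {h : Hist G} (hn : IsNode G a0 k I h) (t : ℕ) :
    IsNode G a0 k I (h.take t) := by
  refine ⟨?_, ?_, ?_⟩
  · intro s hs
    have h1 : s < h.length := by simp [List.length_take] at hs; omega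
    have h2 : s ≤ t := by simp [List.length_take] at hs; omega
    have hget : (h.take t).get ⟨s, hs⟩ = h.get ⟨s, h1⟩ := by simp [List.getElem_take]
    rw [hget, List.take_take, min_eq_left h2]
    exact hn.mover s h1
  · intro s hs
    have h1 : s < h.length := by simp [List.length_take] at hs; omega
    have h2 : s ≤ t := by simp [List.length_take] at hs; omega
    have hget : (h.take t).get ⟨s, hs⟩ = h.get ⟨s, h1⟩ := by simp [List.getElem_take]
    rw [hget, List.take_take, min_eq_left h2]
    exact hn.avail s h1
  · intro s hs
    have h1 : s < h.length := by simp [List.length_take] at hs; omega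
    have h2 : s ≤ t := by simp [List.length_take] at hs; omega
    rw [List.take_take, min_eq_left h2]
    exact hn.nonterm s h1

lemma IsNode.append {h : Hist G} (hn : IsNode G a0 k I h) (hT : ¬ Terminal G a0 h)
    {c : Option (G.A (I h))} (hav : availAct G a0 k h c) :
    IsNode G a0 k I (h ++ [⟨I h, c⟩]) := by
  have htk : (h ++ [(⟨I h, c⟩ : Move G)]).take h.length = h := by simp
  refine ⟨?_, ?_, ?_⟩
  · intro s hs
    have h1 : s ≤ h.length := by simp at hs; omega
    rcases lt_or_eq_of_le h1 with h2 | h2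
    · have hget : (h ++ [(⟨I h, c⟩ : Move G)]).get ⟨s, hs⟩ = h.get ⟨s, h2⟩ := by
        simp [List.getElem_append_left, h2]
      rw [hget, List.take_append_of_le_length (le_of_lt h2)]
      exact hn.mover s h2
    · subst h2
      have hget : (h ++ [(⟨I h, c⟩ : Move G)]).get ⟨h.length, hs⟩ = (⟨I h, c⟩ : Move G) := by simp
      rw [hget, htk]
  · intro s hs
    have h1 : s ≤ h.length := by simp at hs; omega
    rcases lt_or_eq_of_le h1 with h2 | h2
    · have hget : (h ++ [(⟨I h, c⟩ : Move G)]).get ⟨s, hs⟩ = h.get ⟨s, h2⟩ := by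
        simp [List.getElem_append_left, h2]
      rw [hget, List.take_append_of_le_length (le_of_lt h2)]
      exact hn.avail s h2
    · subst h2
      have hget : (h ++ [(⟨I h, c⟩ : Move G)]).get ⟨h.length, hs⟩ = (⟨I h, c⟩ : Move G) := by simp
      rw [hget, htk]
      exact hav
  · intro s hs
    have h1 : s ≤ h.length := by simp at hs; omega
    rcases lt_or_eq_of_le h1 with h2 | h2
    · rw [List.take_append_of_le_length (le_of_lt h2)]
      exact hn.nonterm s h2
    · subst h2
      rw [htk]
      exact hT

/-- sum of counts over `Fin n` equals length -/
lemma sum_count_eq_length (l : List (Fin n)) : ∑ j : Fin n, l.count j = l.length := by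
  induction l with
  | nil => simp
  | cons a l ih =>
    simp only [List.count_cons, List.length_cons, Finset.sum_add_distrib, ih]
    simp

/-- the block lemma: along a node, aligned blocks of `n` moves contain each
player exactly once -/
lemma count_block (hI : Admissible G a0 k I) {h : Hist G} (hnd : IsNode G a0 k I h)
    (b : ℕ) (hb : n * b ≤ h.length) (j : Fin n) :
    ((h.map Sigma.fst).take (n * b)).count j = b := by
  set w := h.map Sigma.fst with hw
  have hadm : ∀ t, t ≤ h.length → ∀ i j : Fin n,
      (w.take t).count i ≤ (w.take t).count j + 1 := by
    intro t ht i j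
    have := hI (h.take t) (hnd.take t) i j
    rwa [List.map_take] at this
  have csum : ∀ t, t ≤ h.length → ∑ i : Fin n, (w.take t).count i = t := by
    intro t ht
    rw [sum_count_eq_length, List.length_take, hw, List.length_map]
    omega
  have cmono : ∀ s t : ℕ, s ≤ t → ∀ i : Fin n,
      (w.take s).count i ≤ (w.take t).count i := by
    intro s t hst i
    have he : w.take s = (w.take t).take s := by rw [List.take_take, min_eq_left hst]
    rw [he]
    exact (List.take_sublist _ _).count_le _
  have key : ∀ b, n * b ≤ h.length → ∀ i : Fin n, (w.take (n * b)).count i = b := by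
    intro b
    induction b with
    | zero => simp
    | succ b ih =>
      intro hb i
      have hmul : n * (b + 1) = n * b + n := Nat.mul_succ n b
      have hb' : n * b ≤ h.length := le_trans (by omega) hb
      have ihb := ih hb'
      -- upper bound along the block
      have ub : ∀ t, n * b ≤ t → t ≤ n * (b + 1) → ∀ i' : Fin n,
          (w.take t).count i' ≤ b + 1 := by
        intro t ht1 ht2 i'
        by_contra hcon
        push_neg at hcon
        have hge : ∀ i'', b ≤ (w.take t).count i'' := by
          intro i''
          have := cmono _ _ ht1 i''
          rwa [ihb i''] at this
        have htlen : t ≤ h.length := le_trans ht2 hb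
        have hex : ∃ i'', (w.take t).count i'' ≤ b := by
          by_contra hall
          push_neg at hall
          have h1 : ∀ i'' : Fin n, (b + 1) + (if i'' = i' then 1 else 0) ≤
              (w.take t).count i'' := by
            intro i''
            by_cases hii : i'' = i'
            · subst hii; simp; omega
            · simp [hii]; exact hall i''
          have h2 := Finset.sum_le_sum (s := (Finset.univ : Finset (Fin n)))
            (fun i'' _ => h1 i'')
          rw [csum t htlen] at h2
          simp [Finset.sum_add_distrib, Finset.sum_ite_eq] at h2
          omega
        obtain ⟨i'', hii⟩ := hex
        have := hadm t htlen i' i''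
        omega
      -- at the end of the block all counts equal b+1
      have hle : ∀ i' : Fin n, (w.take (n * (b + 1))).count i' ≤ b + 1 :=
        ub _ (by omega) le_rfl
      have hsum := csum _ hb
      by_contra hne
      have hlt : (w.take (n * (b + 1))).count i < b + 1 :=
        lt_of_le_of_ne (hle i) hne
      have : ∑ i' : Fin n, (w.take (n * (b + 1))).count i' <
          ∑ _i' : Fin n, (b + 1) :=
        Finset.sum_lt_sum (fun i' _ => hle i') ⟨i, Finset.mem_univ i, hlt⟩
      simp [Finset.sum_const, Fintype.card_fin] at this
      omega
  exact key b hb j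

/-- the set of non-pass positions of a history -/
noncomputable def NP (h : Hist G) : Finset ℕ :=
  (Finset.range h.length).filter (fun t => ∃ (i : Fin n) (a : G.A i), h[t]? = some ⟨i, some a⟩)

lemma exists_nonpass_in_chunk (hn2 : 2 ≤ n) (hI : Admissible G a0 k I) {h : Hist G}
    (hnd : IsNode G a0 k I h) (hT : ¬ Terminal G a0 h) (c : ℕ)
    (hc : c + 2 * n ≤ h.length) :
    ∃ t, c ≤ t ∧ t < c + 2 * n ∧ t ∈ NP h := by
  by_contra hcon
  push_neg at hcon
  have hn0 : 0 < n := by omega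
  have hpass : ∀ t, c ≤ t → t < c + 2 * n → ∀ (ht : t < h.length),
      (h.get ⟨t, ht⟩).2 = none := by
    intro t h1 h2 ht
    by_contra hne
    apply hcon t h1 h2
    refine Finset.mem_filter.mpr ⟨Finset.mem_range.mpr (by omega), ?_⟩
    rcases hm : (h.get ⟨t, ht⟩).2 with _ | a
    · exact absurd hm hne
    · refine ⟨(h.get ⟨t, ht⟩).1, a, ?_⟩
      rw [List.getElem?_eq_getElem ht]
      have : (h.get ⟨t, ht⟩) = ⟨(h.get ⟨t, ht⟩).1, some a⟩ := by
        rw [← hm]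
      exact congrArg some this
  obtain ⟨D, hD⟩ : ∃ D, c / n = D := ⟨_, rfl⟩
  set b := D + 2 with hb
  set q := n * b with hq
  have hA : n * D + c % n = c := by rw [← hD]; exact Nat.div_add_mod c n
  have hcn : c % n < n := Nat.mod_lt c hn0
  have hq1 : q = n * D + 2 * n := by rw [hq, hb]; ring
  have hq2 : n * (b - 1) = n * D + n := by
    have hb1 : b - 1 = D + 1 := by omega
    rw [hb1]; ring
  have hcq : c + n ≤ q := by omega
  have hqc : q ≤ c + 2 * n := by omega
  have hqlen : q ≤ h.length := le_trans hqc hc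
  have hcount1 : ∀ j, ((h.map Sigma.fst).take q).count j = b :=
    count_block hI hnd b hqlen
  have hcount0 : ∀ j, ((h.map Sigma.fst).take (q - n)).count j = b - 1 := by
    have h1 : n * (b - 1) ≤ h.length := by omega
    have h2 := count_block hI hnd (b - 1) h1
    intro j
    have h3 : q - n = n * (b - 1) := by omega
    rw [h3]
    exact h2 j
  have hTtkq : (h.take q).length = q := by rw [List.length_take]; omega
  have hterm : TerminalPass G (h.take q) := by
    refine ⟨by omega, ?_, ?_⟩
    · intro m hm
      rw [hTtkq] at hm
      rw [List.mem_iff_getElem] at hm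
      obtain ⟨s, hs, hms⟩ := hm
      have hslen : s < n := by
        rw [List.length_drop, hTtkq] at hs
        omega
      have hidx : q - n + s < h.length := by omega
      have hgs : ((h.take q).drop (q - n))[s] = h[q - n + s] := by
        rw [List.getElem_drop]
        rw [List.getElem_take]
      rw [hgs] at hms
      rw [← hms]
      exact hpass (q - n + s) (by omega) (by omega) hidx
    · intro i
      have hsplit : (h.map Sigma.fst).take q =
          (h.map Sigma.fst).take (q - n) ++ (((h.map Sigma.fst).take q).drop (q - n)) := by
        conv_lhs => rw [← List.take_append_drop (q - n) ((h.map Sigma.fst).take q)]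
        rw [List.take_take, min_eq_left (by omega)]
      have hcw : (((h.map Sigma.fst).take q).drop (q - n)).count i = 1 := by
        have h1 := hcount1 i
        rw [hsplit, List.count_append, hcount0 i] at h1
        omega
      have hmem : i ∈ ((h.map Sigma.fst).take q).drop (q - n) := by
        have : 0 < (((h.map Sigma.fst).take q).drop (q - n)).count i := by omega
        exact List.count_pos_iff.mp this
      have hmaps : ((h.take q).drop (q - n)).map Sigma.fst =
          ((h.map Sigma.fst).take q).drop (q - n) := by
        rw [List.map_drop, List.map_take]
      rw [← hmaps] at hmem
      obtain ⟨m, hm1, hm2⟩ := List.mem_map.mp hmem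
      exact ⟨m, by rw [hTtkq]; exact hm1, hm2⟩
  rcases lt_or_eq_of_le hqlen with hlt | heq
  · exact hnd.nonterm q hlt (Or.inr hterm)
  · apply hT
    rw [heq, List.take_length] at hterm
    exact Or.inr hterm

lemma np_card_le (hn2 : 2 ≤ n) {h : Hist G} (hnd : IsNode G a0 k I h) :
    (NP h).card ≤ k * (Fintype.card (Move G) * Fintype.card (Profile G)) := by
  classical
  have hn0 : 0 < n := by omega
  set m0 : Move G := ⟨⟨0, hn0⟩, none⟩ with hm0
  set f : ℕ → Move G × Profile G :=
    (fun t => ((h[t]?).getD m0, state G a0 (h.take t))) with hf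
  have hfiber : ∀ p ∈ (NP h).image f, ((NP h).filter (fun t => f t = p)).card ≤ k := by
    intro p hp
    set F := (NP h).filter (fun t => f t = p) with hF
    by_cases hFne : F.Nonempty
    · set T := F.max' hFne with hT
      have hTF : T ∈ F := F.max'_mem hFne
      have hTNP : T ∈ NP h := (Finset.mem_filter.mp hTF).1
      have hfT : f T = p := (Finset.mem_filter.mp hTF).2
      have hTlen : T < h.length :=
        Finset.mem_range.mp (Finset.mem_filter.mp hTNP).1
      obtain ⟨i, a, hia⟩ := (Finset.mem_filter.mp hTNP).2
      have hget' : h.get ⟨T, hTlen⟩ = ⟨i, some a⟩ := by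
        have h1 : h[T]? = some (h.get ⟨T, hTlen⟩) := by
          rw [List.getElem?_eq_getElem hTlen]
          rfl
        rw [hia] at h1
        exact (Option.some_injective _ h1).symm
      have hav := hnd.avail T hTlen
      rw [hget'] at hav
      have hcnt : countAct G a0 (h.take T) ⟨i, some a⟩ < k := hav a rfl
      have hTtk : (h.take T).length = T := by
        rw [List.length_take]; omega
      have hsub : F.erase T ⊆ (Finset.range (h.take T).length).filter
          (fun t => (h.take T)[t]? = some (⟨i, some a⟩ : Move G) ∧
            state G a0 ((h.take T).take t) = state G a0 (h.take T)) := by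
        intro t htm
        have htF : t ∈ F := Finset.mem_of_mem_erase htm
        have htne : t ≠ T := Finset.ne_of_mem_erase htm
        have htlt : t < T := lt_of_le_of_ne (F.le_max' t htF) htne
        have htNP : t ∈ NP h := (Finset.mem_filter.mp htF).1
        have hft : f t = f T := by
          rw [(Finset.mem_filter.mp htF).2, hfT]
        have htlen : t < h.length :=
          Finset.mem_range.mp (Finset.mem_filter.mp htNP).1
        have hftfst : (h[t]?).getD m0 = ⟨i, some a⟩ := by
          have := congrArg Prod.fst hft
          simp only [hf] at this
          rw [this, hia]
          rfl
        have hftsnd : state G a0 (h.take t) = state G a0 (h.take T) := by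
          have := congrArg Prod.snd hft
          simpa [hf] using this
        have hgett : h[t]? = some (⟨i, some a⟩ : Move G) := by
          rw [List.getElem?_eq_getElem htlen] at hftfst ⊢
          simp only [Option.getD_some] at hftfst
          rw [hftfst]
        refine Finset.mem_filter.mpr ⟨Finset.mem_range.mpr (by omega), ?_, ?_⟩
        · rw [List.getElem?_take]
          simp only [htlt, if_pos]
          exact hgett
        · rw [List.take_take, min_eq_left (le_of_lt htlt)]
          exact hftsnd
      have hcard : (F.erase T).card ≤ countAct G a0 (h.take T) ⟨i, some a⟩ := by
        rw [countAct]
        exact Finset.card_le_card hsub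
      have := Finset.card_erase_of_mem hTF
      omega
    · rw [Finset.not_nonempty_iff_eq_empty] at hFne
      rw [hFne]
      simp
  calc (NP h).card ≤ k * ((NP h).image f).card :=
        Finset.card_le_mul_card_image _ k hfiber
    _ ≤ k * (Fintype.card (Move G) * Fintype.card (Profile G)) := by
        refine Nat.mul_le_mul_left k ?_
        rw [← Fintype.card_prod]
        exact Finset.card_le_univ _

/-- an explicit bound for the length of valid nonterminal nodes -/
def maxLen (G : Game n) (k : ℕ) : ℕ :=
  2 * n * (k * (Fintype.card (Move G) * Fintype.card (Profile G)) + 1)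

lemma length_lt_maxLen (hn2 : 2 ≤ n) (hI : Admissible G a0 k I) {h : Hist G}
    (hnd : IsNode G a0 k I h) (hT : ¬ Terminal G a0 h) :
    h.length < maxLen G k := by
  classical
  set K := k * (Fintype.card (Move G) * Fintype.card (Profile G)) with hK
  have hn0 : 0 < n := by omega
  set M := 2 * n with hM
  have hM0 : 0 < M := by omega
  have hch : ∀ j : ℕ, ∃ t, j < h.length / M →
      (M * j ≤ t ∧ t < M * j + M ∧ t ∈ NP h) := by
    intro j
    by_cases hj : j < h.length / M
    · have h1 : (j + 1) * M ≤ (h.length / M) * M :=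
        Nat.mul_le_mul_right M hj
      have h2 : (h.length / M) * M ≤ h.length := Nat.div_mul_le_self _ _
      have h3 : (j + 1) * M = M * j + M := by ring
      have h4 : M * j + 2 * n ≤ h.length := by omega
      obtain ⟨t, ht1, ht2, ht3⟩ := exists_nonpass_in_chunk hn2 hI hnd hT (M * j) h4
      exact ⟨t, fun _ => ⟨ht1, by omega, ht3⟩⟩
    · exact ⟨0, fun h' => absurd h' hj⟩
  choose g hg using hch
  have hdiv : ∀ j, j < h.length / M → g j / M = j := by
    intro j hj
    obtain ⟨h1, h2, _⟩ := hg j hj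
    have hc1 : j * M = M * j := by ring
    have hc2 : (j + 1) * M = M * j + M := by ring
    exact Nat.div_eq_of_lt_le (by omega) (by omega)
  have hcard : h.length / M ≤ (NP h).card := by
    rw [← Finset.card_range (h.length / M)]
    refine Finset.card_le_card_of_injOn (s := Finset.range (h.length / M))
      (t := NP h) g ?_ ?_
    · intro j hj
      exact (hg j (Finset.mem_range.mp hj)).2.2
    · intro j1 hj1 j2 hj2 he
      simp only [Finset.coe_range, Set.mem_Iio] at hj1 hj2
      rw [← hdiv j1 hj1, ← hdiv j2 hj2, he]
  have hnp := np_card_le hn2 hnd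
  rw [← hK] at hnp
  have hKc : h.length / M ≤ K := le_trans hcard hnp
  have hdm := Nat.div_add_mod h.length M
  have hmod : h.length % M < M := Nat.mod_lt _ hM0
  have hmul : M * (h.length / M) ≤ M * K := Nat.mul_le_mul_left M hKc
  have hmax : maxLen G k = M * K + M := by
    rw [maxLen, hM, hK]; ring
  omega

lemma maxLen_le_bound (hn2 : 2 ≤ n) (hk : 0 < k) : maxLen G k ≤ bound G k := by
  classical
  have hMove : Fintype.card (Move G) = (∑ i, Fintype.card (G.A i)) + n := by
    rw [Fintype.card_sigma]
    simp only [Fintype.card_option]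
    rw [Finset.sum_add_distrib]
    simp
  set S := ∑ i, Fintype.card (G.A i) with hS
  set P := Fintype.card (Profile G) with hP
  have hSn : n ≤ S := by
    rw [hS]
    calc n = ∑ _i : Fin n, 1 := by simp
      _ ≤ ∑ i, Fintype.card (G.A i) := Finset.sum_le_sum (fun i _ => Fintype.card_pos)
  have hP1 : 1 ≤ P := Fintype.card_pos
  rw [maxLen, bound, hMove]
  have h1 : k * ((S + n) * P) ≤ k * ((2 * S) * P) := by
    refine Nat.mul_le_mul_left _ (Nat.mul_le_mul_right _ (by omega))
  have h2 : 2 * n * (k * ((S + n) * P) + 1) ≤ 2 * n * (k * ((2 * S) * P) + 1) :=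
    Nat.mul_le_mul_left _ (by omega)
  refine le_trans h2 ?_
  rw [← hS, ← hP]
  have h3 : k * P * S ≤ (k + 2) * (P + 2) * (S + 2) :=
    Nat.mul_le_mul (Nat.mul_le_mul (by omega) (by omega)) (by omega)
  have h4 : n * (k * P * S) ≤ n * ((k + 2) * (P + 2) * (S + 2)) :=
    Nat.mul_le_mul_left n h3
  calc 2 * n * (k * (2 * S * P) + 1) = 4 * (n * (k * P * S)) + 2 * n := by ring
    _ ≤ 4 * (n * ((k + 2) * (P + 2) * (S + 2))) + 2 * n :=
        Nat.add_le_add_right (Nat.mul_le_mul_left 4 h4) _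
    _ ≤ ((k + 2) * (P + 2) * (S + 2) + 2) * (n + 2) * 4 := by
        generalize (k + 2) * (P + 2) * (S + 2) = X
        nlinarith [Nat.zero_le X, Nat.zero_le n]

lemma terminal_playN (hn2 : 2 ≤ n) (hI : Admissible G a0 k I)
    {σ : StratProfile G} (hσ : ValidProfile G a0 k I σ) (t : ℕ) {h : Hist G}
    (hnd : IsNode G a0 k I h) (ht : maxLen G k ≤ h.length + t) :
    Terminal G a0 (playN G a0 I σ t h) := by
  induction t generalizing h with
  | zero =>
    rw [playN_zero]
    by_contra hT
    have := length_lt_maxLen hn2 hI hnd hT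
    omega
  | succ t ih =>
    by_cases hT : Terminal G a0 h
    · rwa [playN_of_terminal σ _ hT]
    · rw [playN_succ, if_neg hT]
      have hav := hσ h hnd hT
      have hnd' := hnd.append hT hav
      refine ih hnd' ?_
      simp only [List.length_append, List.length_cons, List.length_nil]
      omega

lemma outcome_step (hn2 : 2 ≤ n) (hk : 0 < k) (hI : Admissible G a0 k I)
    {σ : StratProfile G} (hσ : ValidProfile G a0 k I σ) {h : Hist G}
    (hnd : IsNode G a0 k I h) (hT : ¬ Terminal G a0 h) :
    outcomeFrom G a0 k I σ h = outcomeFrom G a0 k I σ (h ++ [⟨I h, σ (I h) h⟩]) := by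
  unfold outcomeFrom
  rw [playN_succ, if_neg hT]
  have hterm : Terminal G a0 (playN G a0 I σ (bound G k) (h ++ [⟨I h, σ (I h) h⟩])) := by
    refine terminal_playN hn2 hI hσ _ (hnd.append hT (hσ h hnd hT)) ?_
    have := maxLen_le_bound (G := G) (k := k) hn2 hk
    omega
  have := playN_add_of_terminal σ hterm 1
  rw [← this]

lemma outcome_of_terminal {σ : StratProfile G} {h : Hist G} (hT : Terminal G a0 h) :
    outcomeFrom G a0 k I σ h = refpt G a0 h := by
  unfold outcomeFrom
  rw [playN_of_terminal σ _ hT]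

end Aux

/-- With strict preferences, any two subgame perfect
equilibria of `Γ(a0,k,I)` have the same outcome. -/
theorem spe_outcome_unique {n : ℕ} (hn : 2 ≤ n) (G : Game n) (hG : StrictPrefs G)
    (a0 : Profile G) (k : ℕ) (hk : 0 < k) (I : Hist G → Fin n)
    (hI : Admissible G a0 k I) (σ σ' : StratProfile G)
    (hσ : SPE G a0 k I σ) (hσ' : SPE G a0 k I σ') :
    outcome G a0 k I σ = outcome G a0 k I σ' := by
  classical
  have upd_valid : ∀ (σ σ' : StratProfile G), ValidProfile G a0 k I σ →
      ValidProfile G a0 k I σ' → ∀ h : Hist G, ValidProfile G a0 k I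
        (Function.update σ (I h)
          (fun g => if g = h then σ' (I h) g else σ (I h) g)) := by
    intro σ σ' hσv hσ'v h g gnode gterm
    by_cases hg : g = h
    · subst hg
      simp only [Function.update_self, if_pos rfl]
      exact hσ'v g gnode gterm
    · by_cases hgi : I g = I h
      · rw [hgi, Function.update_self]
        simp only [if_neg hg]
        have hv := hσv g gnode gterm
        rwa [hgi] at hv
      · rw [Function.update_of_ne hgi]
        exact hσv g gnode gterm
  have key : ∀ d (h : Hist G), IsNode G a0 k I h → bound G k + 1 - h.length ≤ d →
      ∀ σ σ', SPE G a0 k I σ → SPE G a0 k I σ' →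
        outcomeFrom G a0 k I σ h = outcomeFrom G a0 k I σ' h := by
    intro d
    induction d with
    | zero =>
      intro h hnode hd σ σ' hσ hσ'
      have hT : Terminal G a0 h := by
        by_contra hT
        have h1 := length_lt_maxLen hn hI hnode hT
        have h2 := maxLen_le_bound (G := G) (k := k) hn hk
        omega
      rw [outcome_of_terminal hT, outcome_of_terminal hT]
    | succ d ih =>
      intro h hnode hd σ σ' hσ hσ'
      by_cases hT : Terminal G a0 h
      · rw [outcome_of_terminal hT, outcome_of_terminal hT]
      · have hlen : h.length < maxLen G k := length_lt_maxLen hn hI hnode hT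
        have hbd : maxLen G k ≤ bound G k := maxLen_le_bound hn hk
        have hIH : ∀ (c : Option (G.A (I h))), availAct G a0 k h c →
            ∀ σ σ', SPE G a0 k I σ → SPE G a0 k I σ' →
              outcomeFrom G a0 k I σ (h ++ [⟨I h, c⟩]) =
                outcomeFrom G a0 k I σ' (h ++ [⟨I h, c⟩]) := by
          intro c hc σ₁ σ₂ h1 h2
          refine ih _ (hnode.append hT hc) ?_ σ₁ σ₂ h1 h2
          simp only [List.length_append, List.length_cons, List.length_nil]
          omega
        have main_ineq : ∀ σ σ', SPE G a0 k I σ → SPE G a0 k I σ' →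
            G.u (I h) (outcomeFrom G a0 k I σ' h) ≤
              G.u (I h) (outcomeFrom G a0 k I σ h) := by
          intro σ σ' hσ hσ'
          set τ : Strategy G (I h) :=
            (fun g => if g = h then σ' (I h) g else σ (I h) g) with hτ
          have hvalid := upd_valid σ σ' hσ.1 hσ'.1 h
          have hdev := hσ.2 h hnode hT τ hvalid
          have hav' : availAct G a0 k h (σ' (I h) h) := hσ'.1 h hnode hT
          have hcomp : outcomeFrom G a0 k I (Function.update σ (I h) τ) h
              = outcomeFrom G a0 k I σ' h := by
            have huph : Function.update σ (I h) τ (I h) h = σ' (I h) h := by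
              rw [Function.update_self, hτ]
              simp
            have hstep1 : outcomeFrom G a0 k I (Function.update σ (I h) τ) h =
                refpt G a0 (playN G a0 I (Function.update σ (I h) τ) (bound G k)
                  (h ++ [⟨I h, σ' (I h) h⟩])) := by
              unfold outcomeFrom
              rw [playN_succ, if_neg hT, huph]
            have hag : ∀ g : Hist G,
                (h ++ [(⟨I h, σ' (I h) h⟩ : Move G)]).length ≤ g.length →
                ∀ j, Function.update σ (I h) τ j g = σ j g := by
              intro g hg j
              by_cases hj : j = I h
              · subst hj
                rw [Function.update_self, hτ]
                have hne : g ≠ h := by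
                  intro he
                  subst he
                  simp at hg
                simp [hne]
              · rw [Function.update_of_ne hj]
            have hstep2 := playN_congr (a0 := a0) (I := I) (Function.update σ (I h) τ) σ
              (bound G k) (h ++ [⟨I h, σ' (I h) h⟩]) hag
            have hterm : Terminal G a0 (playN G a0 I σ (bound G k)
                (h ++ [⟨I h, σ' (I h) h⟩])) := by
              refine terminal_playN hn hI hσ.1 _ (hnode.append hT hav') ?_
              simp only [List.length_append, List.length_cons, List.length_nil]
              omega
            have hstep3 := playN_add_of_terminal (I := I) (a0 := a0) σ hterm 1
            calc outcomeFrom G a0 k I (Function.update σ (I h) τ) h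
                = refpt G a0 (playN G a0 I (Function.update σ (I h) τ) (bound G k)
                  (h ++ [⟨I h, σ' (I h) h⟩])) := hstep1
              _ = refpt G a0 (playN G a0 I σ (bound G k)
                  (h ++ [⟨I h, σ' (I h) h⟩])) := by rw [hstep2]
              _ = refpt G a0 (playN G a0 I σ (bound G k + 1)
                  (h ++ [⟨I h, σ' (I h) h⟩])) := by rw [hstep3]
              _ = outcomeFrom G a0 k I σ (h ++ [(⟨I h, σ' (I h) h⟩ : Move G)]) := rfl
              _ = outcomeFrom G a0 k I σ' (h ++ [(⟨I h, σ' (I h) h⟩ : Move G)]) :=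
                  hIH _ hav' σ σ' hσ hσ'
              _ = outcomeFrom G a0 k I σ' h :=
                  (outcome_step hn hk hI hσ'.1 hnode hT).symm
          rwa [hcomp] at hdev
        have h1 := main_ineq σ σ' hσ hσ'
        have h2 := main_ineq σ' σ hσ' hσ
        exact hG (I h) (le_antisymm h2 h1)
  exact key (bound G k + 1) [] isNode_nil (by simp) σ σ' hσ hσ'

end NoHarm
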